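/- Let C be a finitely complete centralic category in which regular epimorphisms are stable under binary products. The commutative objects are closed under regular quotients: for any regular epimorphism q : X → Y, if X is commutative then so is Y. -/

import Mathlib

open CategoryTheory CategoryTheory.Limits

universe v u

/-- A pointed category with binary products is *centralic*. -/
def Centralic (C : Type u) [Category.{v} C] [HasZeroObject C] [HasZeroMorphisms C]
    [HasBinaryProducts C] : Prop :=
  ∀ ⦃X Y Z S : C⦄ (f : X ⨯ Y ⟶ Z) (x x' : S ⟶ X) (y : S ⟶ Y),
    prod.lift x 0 ≫ f = prod.lift x' 0 ≫ f →
    prod.lift x y ≫ f = prod.lift x' y ≫ f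

/-- `ρ : A ⨯ B ⟶ X` is a cooperator for `f : A ⟶ X` and `g : B ⟶ X`. -/
def IsCooperator {C : Type u} [Category.{v} C] [HasZeroObject C] [HasZeroMorphisms C]
    [HasBinaryProducts C] {A B X : C} (f : A ⟶ X) (g : B ⟶ X) (ρ : A ⨯ B ⟶ X) : Prop :=
  prod.lift (𝟙 A) 0 ≫ ρ = f ∧ prod.lift 0 (𝟙 B) ≫ ρ = g

/-- Two morphisms with common codomain commute if they admit a cooperator. -/
def Commutes {C : Type u} [Category.{v} C] [HasZeroObject C] [HasZeroMorphisms C]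
    [HasBinaryProducts C] {A B X : C} (f : A ⟶ X) (g : B ⟶ X) : Prop :=
  ∃ ρ : A ⨯ B ⟶ X, IsCooperator f g ρ

/-- A morphism `f : A ⟶ B` is central if it commutes with `𝟙 B`. -/
def Central {C : Type u} [Category.{v} C] [HasZeroObject C] [HasZeroMorphisms C]
    [HasBinaryProducts C] {A B : C} (f : A ⟶ B) : Prop :=
  Commutes f (𝟙 B)

/-- `q : X ⟶ Q` is a coequalizer of `u v : A ⟶ X`. -/
def IsCoequalizerDiagram {C : Type u} [Category.{v} C] {A X Q : C}
    (u v : A ⟶ X) (q : X ⟶ Q) : Prop :=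
  u ≫ q = v ≫ q ∧ ∀ ⦃Z : C⦄ (h : X ⟶ Z), u ≫ h = v ≫ h → ∃! t : Q ⟶ Z, q ≫ t = h

/-- A morphism is a regular epimorphism if it is the coequalizer of some pair. -/
def IsRegularEpimorphism {C : Type u} [Category.{v} C] {X Q : C} (q : X ⟶ Q) : Prop :=
  ∃ (A : C) (u v : A ⟶ X), IsCoequalizerDiagram u v q

/-- Regular epimorphisms are stable under binary products. -/
def RegularEpisStableUnderProducts (C : Type u) [Category.{v} C] [HasBinaryProducts C] : Prop :=
  ∀ ⦃X₁ Q₁ X₂ Q₂ : C⦄ (q₁ : X₁ ⟶ Q₁) (q₂ : X₂ ⟶ Q₂),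
    IsRegularEpimorphism q₁ → IsRegularEpimorphism q₂ →
    IsRegularEpimorphism (prod.map q₁ q₂)

/-- Commutative objects are closed under regular quotients. -/
theorem stmt15 (C : Type u) [Category.{v} C] [HasZeroObject C] [HasZeroMorphisms C]
    [HasFiniteLimits C] (hC : Centralic C)
    (hstab : RegularEpisStableUnderProducts C)
    {X Y : C} (q : X ⟶ Y) (hq : IsRegularEpimorphism q)
    (hX : Central (𝟙 X)) : Central (𝟙 Y) := by
  obtain ⟨ρ, hρ1, hρ2⟩ := hX
  -- q is an epimorphism
  have hepi : ∀ {Z : C} (a b : Y ⟶ Z), q ≫ a = q ≫ b → a = b := by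
    obtain ⟨A, u, v, huv, hcoeq⟩ := hq
    intro Z a b hab
    have huva : u ≫ q ≫ a = v ≫ q ≫ a := by
      rw [← Category.assoc, ← Category.assoc, huv]
    obtain ⟨t, -, ht⟩ := hcoeq (q ≫ a) huva
    rw [ht a rfl, ht b hab.symm]
  obtain ⟨A, u, v, huv, hcoeq⟩ := hstab q q hq hq
  have hu1 : (u ≫ prod.fst) ≫ q = (v ≫ prod.fst) ≫ q := by
    have := huv =≫ prod.fst
    simpa using this
  have hu2 : (u ≫ prod.snd) ≫ q = (v ≫ prod.snd) ≫ q := by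
    have := huv =≫ prod.snd
    simpa using this
  set u1 := u ≫ prod.fst
  set u2 := u ≫ prod.snd
  set v1 := v ≫ prod.fst
  set v2 := v ≫ prod.snd
  -- main equality: u ≫ ρ ≫ q = v ≫ ρ ≫ q
  have step1 : prod.lift u1 u2 ≫ (ρ ≫ q) = prod.lift v1 u2 ≫ (ρ ≫ q) := by
    apply hC
    have l : ∀ w : A ⟶ X, prod.lift w (0 : A ⟶ X) ≫ (ρ ≫ q) = w ≫ q := by
      intro w
      have h : prod.lift w (0 : A ⟶ X) = w ≫ prod.lift (𝟙 X) 0 := by simp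
      rw [h, Category.assoc, ← Category.assoc (prod.lift (𝟙 X) 0), hρ1,
        Category.id_comp]
    rw [l u1, l v1, hu1]
  have step2 : prod.lift v1 u2 ≫ (ρ ≫ q) = prod.lift v1 v2 ≫ (ρ ≫ q) := by
    have swapeq : ∀ (a b : A ⟶ X), prod.lift a b ≫ (prod.lift prod.snd prod.fst ≫ ρ ≫ q)
        = prod.lift b a ≫ (ρ ≫ q) := by
      intro a b
      rw [← Category.assoc]
      congr 1
      ext
      · exact (Category.assoc _ _ _).trans (by rw [prod.lift_fst, prod.lift_snd, prod.lift_fst])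
      · exact (Category.assoc _ _ _).trans (by rw [prod.lift_snd, prod.lift_fst, prod.lift_snd])
    have this2 := hC (prod.lift prod.snd prod.fst ≫ ρ ≫ q) u2 v2 v1 ?_
    · rw [swapeq, swapeq] at this2
      exact this2
    · rw [swapeq, swapeq]
      have l : ∀ w : A ⟶ X, prod.lift (0 : A ⟶ X) w ≫ (ρ ≫ q) = w ≫ q := by
        intro w
        have h : prod.lift (0 : A ⟶ X) w = w ≫ prod.lift 0 (𝟙 X) := by simp
        rw [h, Category.assoc, ← Category.assoc (prod.lift 0 (𝟙 X)), hρ2,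
          Category.id_comp]
      rw [l u2, l v2, hu2]
  have main : u ≫ (ρ ≫ q) = v ≫ (ρ ≫ q) := by
    have hu : u = prod.lift u1 u2 := by ext; exacts [(prod.lift_fst _ _).symm, (prod.lift_snd _ _).symm]
    have hv : v = prod.lift v1 v2 := by ext; exacts [(prod.lift_fst _ _).symm, (prod.lift_snd _ _).symm]
    rw [hu, hv, step1, step2]
  obtain ⟨t, ht, -⟩ := hcoeq (ρ ≫ q) main
  refine ⟨t, ?_, ?_⟩
  · apply hepi
    have h : q ≫ prod.lift (𝟙 Y) 0 = prod.lift (𝟙 X) 0 ≫ prod.map q q := by simp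
    rw [← Category.assoc, h, Category.assoc, ht, ← Category.assoc, hρ1,
      Category.id_comp, Category.comp_id]
  · apply hepi
    have h : q ≫ prod.lift 0 (𝟙 Y) = prod.lift 0 (𝟙 X) ≫ prod.map q q := by simp
    rw [← Category.assoc, h, Category.assoc, ht, ← Category.assoc, hρ2,
      Category.id_comp, Category.comp_id]
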